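/- Let Γ be a finite connected cubic G-vertex-transitive graph such that every abelian normal subgroup of G is semiregular on the vertices of Γ. Let N be a nontrivial abelian normal subgroup of G and let K be the kernel of the induced action of G on the set of N-orbits on vertices. Then the centralizer of N in K equals N, i.e. C_K(N) = N. -/

import Mathlib

/- STATEMENT 17:
Let Γ be a finite connected cubic G-vertex-transitive graph such that every abelian
normal subgroup of G is semiregular. Let N be a nontrivial abelian normal subgroup of G
and let K be the kernel of the induced action of G on the set of N-orbits on vertices.
Then C_K(N) = N. -/

namespace Stmt17

/-- A set of permutations is semiregular if only the identity fixes a point. -/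
def Semiregular {V : Type} (N : Subgroup (Equiv.Perm V)) : Prop :=
  ∀ n ∈ N, ∀ v : V, n v = v → n = 1

theorem stmt17 {V : Type} [Fintype V] (Γ : SimpleGraph V)
    (hconn : Γ.Connected)
    (hcubic : ∀ v : V, (Γ.neighborSet v).ncard = 3)
    (G : Subgroup (Equiv.Perm V))
    (hAut : ∀ g ∈ G, ∀ u v : V, Γ.Adj (g u) (g v) ↔ Γ.Adj u v)
    (hTrans : ∀ u v : V, ∃ g ∈ G, g u = v)
    (hallsemi : ∀ N : Subgroup (Equiv.Perm V), N ≤ G →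
      (∀ g ∈ G, ∀ n ∈ N, g * n * g⁻¹ ∈ N) →
      (∀ a ∈ N, ∀ b ∈ N, a * b = b * a) → Semiregular N)
    (N : Subgroup (Equiv.Perm V)) (hNG : N ≤ G) (hNne : N ≠ ⊥)
    (hNnormal : ∀ g ∈ G, ∀ n ∈ N, g * n * g⁻¹ ∈ N)
    (hNab : ∀ a ∈ N, ∀ b ∈ N, a * b = b * a)
    -- K is the kernel of the action of G on the set of N-orbits:
    -- it consists of those g ∈ G fixing every N-orbit setwise
    (K : Subgroup (Equiv.Perm V))
    (hK : ∀ g : Equiv.Perm V,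
      g ∈ K ↔ g ∈ G ∧ ∀ w : V, g w ∈ MulAction.orbit (↥N) w) :
    -- the centralizer of N in K equals N
    {g : Equiv.Perm V | g ∈ K ∧ ∀ n ∈ N, g * n = n * g} = (N : Set (Equiv.Perm V)) := by
  obtain ⟨v⟩ := hconn.nonempty
  -- helper: orbit membership gives an element of N
  have horb : ∀ g ∈ K, ∀ w : V, ∃ n ∈ N, g w = n w := by
    intro g hg w
    obtain ⟨hgG, horb⟩ := (hK g).mp hg
    obtain ⟨⟨n, hn⟩, hnw⟩ := MulAction.mem_orbit_iff.mp (horb w)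
    exact ⟨n, hn, hnw.symm⟩
  -- the centralizer of N inside K as a subgroup
  set C : Subgroup (Equiv.Perm V) :=
    K ⊓ Subgroup.centralizer (N : Set (Equiv.Perm V)) with hCdef
  have hmemC : ∀ g : Equiv.Perm V,
      g ∈ C ↔ g ∈ K ∧ ∀ n ∈ N, g * n = n * g := by
    intro g
    rw [hCdef, Subgroup.mem_inf, Subgroup.mem_centralizer_iff]
    exact ⟨fun ⟨h1, h2⟩ => ⟨h1, fun n hn => (h2 n hn).symm⟩,
           fun ⟨h1, h2⟩ => ⟨h1, fun n hn => (h2 n hn).symm⟩⟩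
  -- N ≤ K
  have hNK : (N : Set (Equiv.Perm V)) ⊆ K := by
    intro n hn
    show n ∈ K
    rw [hK]
    refine ⟨hNG hn, fun w => ?_⟩
    exact ⟨(⟨n, hn⟩ : ↥N), rfl⟩
  -- N ≤ C
  have hNC : ∀ n ∈ N, n ∈ C := by
    intro n hn
    rw [hmemC]
    exact ⟨hNK hn, fun m hm => hNab n hn m hm⟩
  -- C ≤ G
  have hCG : C ≤ G := by
    intro g hg
    exact ((hK g).mp ((hmemC g).mp hg).1).1
  -- C is normal in G
  have hCnorm : ∀ g ∈ G, ∀ c ∈ C, g * c * g⁻¹ ∈ C := by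
    intro g hgG c hc
    obtain ⟨hcK, hcc⟩ := (hmemC c).mp hc
    rw [hmemC]
    constructor
    · rw [hK]
      refine ⟨G.mul_mem (G.mul_mem hgG (hCG hc)) (G.inv_mem hgG), fun w => ?_⟩
      obtain ⟨n, hn, hnw⟩ := horb c hcK (g⁻¹ w)
      have hgn : g * n * g⁻¹ ∈ N := hNnormal g hgG n hn
      refine ⟨(⟨g * n * g⁻¹, hgn⟩ : ↥N), ?_⟩
      show (g * n * g⁻¹) w = (g * c * g⁻¹) w
      simp only [Equiv.Perm.mul_apply, hnw]
    · intro n hn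
      have hn' : g⁻¹ * n * g ∈ N := by
        have := hNnormal g⁻¹ (G.inv_mem hgG) n hn
        simpa using this
      have hcomm := hcc _ hn'
      -- c * (g⁻¹ * n * g) = (g⁻¹ * n * g) * c
      have : g * (c * (g⁻¹ * n * g)) * g⁻¹ = g * ((g⁻¹ * n * g) * c) * g⁻¹ := by
        rw [hcomm]
      calc g * c * g⁻¹ * n = g * (c * (g⁻¹ * n * g)) * g⁻¹ := by group
        _ = g * ((g⁻¹ * n * g) * c) * g⁻¹ := this
        _ = n * (g * c * g⁻¹) := by group
  -- C is abelian: every element of K acts on each N-orbit as an N-translation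
  have hCab : ∀ a ∈ C, ∀ b ∈ C, a * b = b * a := by
    intro a ha b hb
    obtain ⟨haK, hac⟩ := (hmemC a).mp ha
    obtain ⟨hbK, hbc⟩ := (hmemC b).mp hb
    ext w
    obtain ⟨n, hn, hnw⟩ := horb b hbK w
    obtain ⟨m, hm, hmw⟩ := horb a haK w
    have h1 : a (b w) = n (m w) := by
      rw [hnw]
      have := hac n hn
      calc a (n w) = (a * n) w := rfl
        _ = (n * a) w := by rw [this]
        _ = n (a w) := rfl
        _ = n (m w) := by rw [hmw]
    have h2 : b (a w) = m (n w) := by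
      rw [hmw]
      have := hbc m hm
      calc b (m w) = (b * m) w := rfl
        _ = (m * b) w := by rw [this]
        _ = m (b w) := rfl
        _ = m (n w) := by rw [hnw]
    have h3 : n (m w) = m (n w) := by
      have := hNab n hn m hm
      calc n (m w) = (n * m) w := rfl
        _ = (m * n) w := by rw [this]
        _ = m (n w) := rfl
    show a (b w) = b (a w)
    rw [h1, h2, h3]
  -- hence C is semiregular
  have hsemi : Semiregular C := hallsemi C hCG hCnorm hCab
  -- conclude
  ext g
  simp only [Set.mem_setOf_eq, SetLike.mem_coe]
  constructor
  · rintro ⟨hgK, hgc⟩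
    have hgC : g ∈ C := (hmemC g).mpr ⟨hgK, hgc⟩
    obtain ⟨n, hn, hnv⟩ := horb g hgK v
    have hmem : n⁻¹ * g ∈ C := C.mul_mem (C.inv_mem (hNC n hn)) hgC
    have hfix : (n⁻¹ * g) v = v := by
      show n⁻¹ (g v) = v
      rw [hnv]
      exact Equiv.symm_apply_apply n v
    have h1 := hsemi (n⁻¹ * g) hmem v hfix
    rw [inv_mul_eq_one] at h1
    exact h1 ▸ hn
  · intro hgN
    exact ⟨hNK hgN, fun n hn => hNab g hgN n hn⟩

end Stmt17
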